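/- Let n be an odd positive integer and let d be a divisor of n with 1 < d < n. Let ν_1, …, ν_d be integers such that for every divisor c of n with c ≠ 1, the multiset of ∼_{n/c}-classes of (ν_1, …, ν_d) equals the multiset of ∼_{n/c}-classes of (1, 2, …, d). Then for every b ∈ 𝔹_n one has |Σ_{i=1}^{d} (κ_{ν_i} · μ(γ_n(ν_i)) · δ^{(n/γ_n(ν_i))}_{b,ν_i} − μ(γ_n(i)) · δ^{(n/γ_n(i))}_{b,i})| ≤ 1 + 2^{P(d)+2}, where P(d) is the number of distinct prime divisors of d. -/

import Mathlib

/-- `nPart n p = p^{v_p(n)}`, the `p`-part of `n`. -/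
def nPart (n p : ℕ) : ℕ := p ^ (n.factorization p)

/-- The representative of `x` modulo `m` lying in the interval `(-m/2, m/2]`. -/
def midRep (x : ℤ) (m : ℕ) : ℤ :=
  if 2 * (x % (m : ℤ)) ≤ (m : ℤ) then x % (m : ℤ) else x % (m : ℤ) - (m : ℤ)

/-- `|x|_m`, the absolute value of the representative of `x` modulo `m` in
`(-m/2, m/2]`. -/
def absRep (x : ℤ) (m : ℕ) : ℤ := |midRep x m|

/-- `γ_n(x)`, the product of the primes `p` dividing `n` with
`|x|_{n_p} < n_p/(2p)`. -/
def gammaFn (n : ℕ) (x : ℤ) : ℕ :=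
  ∏ p ∈ n.primeFactors,
    if 2 * (p : ℤ) * absRep x (nPart n p) < (nPart n p : ℤ) then p else 1

/-- The predicate describing membership in `𝔹_n ⊆ ℤ/nℤ`:
`|x|_{n_p} > n_p/(2p)` for every prime `p` dividing `n`. -/
def inBB (n : ℕ) (b : ZMod n) : Prop :=
  ∀ p ∈ n.primeFactors, (nPart n p : ℤ) < 2 * (p : ℤ) * absRep (b.val : ℤ) (nPart n p)


/-- `𝔹_n` realized as the finset of representatives `b ∈ {0, …, n−1}` with
`|b|_{n_p} > n_p/(2p)` for every prime `p` dividing `n`. -/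
def BBFinset (n : ℕ) : Finset ℕ :=
  (Finset.range n).filter
    (fun b => ∀ p ∈ n.primeFactors,
      (nPart n p : ℤ) < 2 * (p : ℤ) * absRep (b : ℤ) (nPart n p))

/-- `δ^{(m)}_{x,y} = 1` if `x ≡ ±y (mod m)` and `0` otherwise. -/
def deltaSim (m : ℕ) (x y : ℤ) : ℤ :=
  if x ≡ y [ZMOD m] ∨ x ≡ -y [ZMOD m] then 1 else 0

namespace BDaux

def SmallP (n q : ℕ) (x : ℤ) : Prop :=
  2 * (q : ℤ) * absRep x (nPart n q) < (nPart n q : ℤ)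

instance (n q : ℕ) (x : ℤ) : Decidable (SmallP n q x) := by
  unfold SmallP; infer_instance

def Mp (n q : ℕ) : ℕ := q ^ (n.factorization q - 1)

lemma midRep_modEq (x : ℤ) (m : ℕ) : midRep x m ≡ x [ZMOD (m : ℤ)] := by
  unfold midRep Int.ModEq
  split
  · exact Int.emod_emod_of_dvd x dvd_rfl
  · rw [Int.sub_emod, Int.emod_self, sub_zero, Int.emod_emod_of_dvd x dvd_rfl,
      Int.emod_emod_of_dvd x dvd_rfl]

lemma absRep_eq_of_modEq {x y : ℤ} {m : ℕ} (h : x ≡ y [ZMOD (m : ℤ)]) :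
    absRep x m = absRep y m := by
  unfold absRep midRep
  rw [show x % (m : ℤ) = y % (m : ℤ) from h]

lemma absRep_neg (x : ℤ) {m : ℕ} (hm : Odd m) : absRep (-x) m = absRep x m := by
  have hm0 : 0 < m := hm.pos
  have hm0' : (0 : ℤ) < (m : ℤ) := by exact_mod_cast hm0
  have hr2 : 2 * (x % (m : ℤ)) ≠ (m : ℤ) := by
    intro hr
    obtain ⟨k, hk⟩ := hm
    have : (m : ℤ) = 2 * k + 1 := by exact_mod_cast hk
    omega
  rcases eq_or_ne (x % (m : ℤ)) 0 with h0 | h0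
  · have hneg : (-x) % (m : ℤ) = 0 := by
      have : (m : ℤ) ∣ x := Int.dvd_of_emod_eq_zero h0
      exact Int.emod_eq_zero_of_dvd (dvd_neg.mpr this)
    unfold absRep midRep
    rw [h0, hneg]
  · have hr0 : 0 ≤ x % (m : ℤ) := Int.emod_nonneg x (by positivity)
    have hrm : x % (m : ℤ) < m := Int.emod_lt_of_pos x hm0'
    have hneg : (-x) % (m : ℤ) = (m : ℤ) - x % (m : ℤ) := by
      have h1 : -x ≡ (m : ℤ) - x % (m : ℤ) [ZMOD (m : ℤ)] := by
        have hx : x % (m : ℤ) ≡ x [ZMOD (m : ℤ)] := Int.emod_emod_of_dvd x dvd_rfl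
        calc -x ≡ -(x % (m : ℤ)) [ZMOD (m : ℤ)] := hx.symm.neg
          _ ≡ (m : ℤ) - x % (m : ℤ) [ZMOD (m : ℤ)] := by
              symm
              rw [Int.modEq_iff_dvd]
              exact ⟨-1, by ring⟩
      have := h1.symm
      unfold Int.ModEq at this
      rw [← this, Int.emod_eq_of_lt (by omega) (by omega)]
    unfold absRep midRep
    simp only [hneg]
    split_ifs with ha hb hb
    · exfalso; omega
    · rw [abs_sub_comm]
    · have he : (m : ℤ) - x % (m : ℤ) - (m : ℤ) = -(x % (m : ℤ)) := by ring
      rw [he, abs_neg]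
    · exfalso; omega


lemma gammaFn_eq_prod (n : ℕ) (x : ℤ) :
    gammaFn n x = ∏ p ∈ n.primeFactors, if SmallP n p x then p else 1 := rfl

lemma gamma_decomp (n : ℕ) (x : ℤ) {q : ℕ} (hq : q ∈ n.primeFactors) :
    ∃ g : ℕ, gammaFn n x = (if SmallP n q x then q else 1) * g ∧ ¬ q ∣ g := by
  classical
  have hqp : q.Prime := Nat.prime_of_mem_primeFactors hq
  refine ⟨∏ p ∈ n.primeFactors.erase q, if SmallP n p x then p else 1, ?_, ?_⟩
  · rw [gammaFn_eq_prod, ← Finset.mul_prod_erase _ _ hq]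
  · intro hdvd
    obtain ⟨p, hp, hpd⟩ := (Prime.dvd_finset_prod_iff hqp.prime _).mp hdvd
    have hpq : p ≠ q := (Finset.mem_erase.mp hp).1
    by_cases hs : SmallP n p x
    · rw [if_pos hs] at hpd
      have hpp : p.Prime := Nat.prime_of_mem_primeFactors (Finset.mem_erase.mp hp).2
      exact hpq ((Nat.prime_dvd_prime_iff_eq hqp hpp).mp hpd).symm
    · rw [if_neg hs] at hpd
      exact hqp.ne_one (Nat.dvd_one.mp hpd)

lemma gamma_dvd (n : ℕ) (x : ℤ) : gammaFn n x ∣ n := by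
  refine dvd_trans ?_ (Nat.prod_primeFactors_dvd n)
  rw [gammaFn_eq_prod]
  apply Finset.prod_dvd_prod_of_dvd
  intro p _
  split
  · exact dvd_rfl
  · exact one_dvd p

lemma Mp_mul_q (n q : ℕ) (hq : q ∈ n.primeFactors) : Mp n q * q = nPart n q := by
  have hv : 0 < n.factorization q :=
    Nat.Prime.factorization_pos_of_dvd (Nat.prime_of_mem_primeFactors hq)
      ((Nat.mem_primeFactors.mp hq).2.2) (Nat.dvd_of_mem_primeFactors hq)
  rw [Mp, nPart, ← pow_succ]
  congr 1
  omega

lemma Np_dvd_div_gamma {n : ℕ} {x : ℤ} {q : ℕ} (hq : q ∈ n.primeFactors)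
    (hs : ¬ SmallP n q x) : nPart n q ∣ n / gammaFn n x := by
  obtain ⟨g, hg, hqg⟩ := gamma_decomp n x hq
  rw [if_neg hs, one_mul] at hg
  have hqp : q.Prime := Nat.prime_of_mem_primeFactors hq
  have hγ : gammaFn n x ∣ n := gamma_dvd n x
  have hn : n / gammaFn n x * gammaFn n x = n := Nat.div_mul_cancel hγ
  have hcop : Nat.Coprime (nPart n q) (gammaFn n x) := by
    rw [hg, nPart]
    exact Nat.Coprime.pow_left _ ((Nat.Prime.coprime_iff_not_dvd hqp).mpr hqg)
  have hdvd : nPart n q ∣ n / gammaFn n x * gammaFn n x := by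
    rw [hn]; exact Nat.ordProj_dvd n q
  exact hcop.dvd_of_dvd_mul_right hdvd

lemma Mp_dvd_div_gamma {n : ℕ} {x : ℤ} {q : ℕ} (hq : q ∈ n.primeFactors) :
    Mp n q ∣ n / gammaFn n x := by
  by_cases hs : SmallP n q x
  · obtain ⟨g, hg, hqg⟩ := gamma_decomp n x hq
    rw [if_pos hs] at hg
    have hqp : q.Prime := Nat.prime_of_mem_primeFactors hq
    have hγ : gammaFn n x ∣ n := gamma_dvd n x
    have hn : n / gammaFn n x * gammaFn n x = n := Nat.div_mul_cancel hγ
    have hdvd : Mp n q * q ∣ (n / gammaFn n x * g) * q := by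
      rw [Mp_mul_q n q hq]
      have : n / gammaFn n x * g * q = n := by
        calc n / gammaFn n x * g * q = n / gammaFn n x * (q * g) := by ring
          _ = n / gammaFn n x * gammaFn n x := by rw [← hg]
          _ = n := hn
      rw [this]; exact Nat.ordProj_dvd n q
    have h2 : Mp n q ∣ n / gammaFn n x * g :=
      (mul_dvd_mul_iff_right (Nat.Prime.ne_zero hqp)).mp hdvd
    have hcop : Nat.Coprime (Mp n q) g := by
      rw [Mp]
      exact Nat.Coprime.pow_left _
        ((Nat.Prime.coprime_iff_not_dvd (Nat.prime_of_mem_primeFactors hq)).mpr hqg)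
    exact hcop.dvd_of_dvd_mul_right h2
  · exact dvd_trans ⟨q, (Mp_mul_q n q hq).symm⟩ (Np_dvd_div_gamma hq hs)

lemma Np_dvd_div_p' {n q p' : ℕ} (hq : q ∈ n.primeFactors) (hp' : p'.Prime)
    (hp'n : p' ∣ n) (hne : q ≠ p') : nPart n q ∣ n / p' := by
  have hn : n / p' * p' = n := Nat.div_mul_cancel hp'n
  have hcop : Nat.Coprime (nPart n q) p' := by
    rw [nPart]
    exact Nat.Coprime.pow_left _
      ((Nat.coprime_primes (Nat.prime_of_mem_primeFactors hq) hp').mpr hne)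
  refine hcop.dvd_of_dvd_mul_right ?_
  rw [hn]; exact Nat.ordProj_dvd n q

lemma Mp_dvd_div_p' {n q p' : ℕ} (hq : q ∈ n.primeFactors) (hp' : p'.Prime)
    (hp'n : p' ∣ n) : Mp n q ∣ n / p' := by
  by_cases hne : q = p'
  · subst hne
    have hn : n / q * q = n := Nat.div_mul_cancel hp'n
    have hdvd : Mp n q * q ∣ n / q * q := by
      rw [Mp_mul_q n q hq, hn]; exact Nat.ordProj_dvd n q
    exact (mul_dvd_mul_iff_right hp'.ne_zero).mp hdvd
  · exact dvd_trans ⟨q, (Mp_mul_q n q hq).symm⟩ (Np_dvd_div_p' hq hp' hp'n hne)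


-- new material
lemma deltaSim_nonneg (m : ℕ) (x y : ℤ) : 0 ≤ deltaSim m x y := by
  unfold deltaSim; split <;> norm_num

lemma deltaSim_le_one (m : ℕ) (x y : ℤ) : deltaSim m x y ≤ 1 := by
  unfold deltaSim; split <;> norm_num

lemma abs_deltaSim_le_one (m : ℕ) (x y : ℤ) : |deltaSim m x y| ≤ 1 := by
  rw [abs_of_nonneg (deltaSim_nonneg m x y)]; exact deltaSim_le_one m x y

lemma exists_eps_of_deltaSim_ne_zero {m : ℕ} {x y : ℤ} (h : deltaSim m x y ≠ 0) :
    ∃ ε : ℤ, (ε = 1 ∨ ε = -1) ∧ x ≡ ε * y [ZMOD (m : ℤ)] := by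
  unfold deltaSim at h
  split at h
  · rename_i hc
    rcases hc with hc | hc
    · exact ⟨1, Or.inl rfl, by simpa using hc⟩
    · exact ⟨-1, Or.inr rfl, by rw [neg_one_mul]; exact hc⟩
  · exact absurd rfl h

lemma abs_moebius_le_one (k : ℕ) : |(ArithmeticFunction.moebius k : ℤ)| ≤ 1 := by
  by_cases h : Squarefree k
  · rw [ArithmeticFunction.moebius_apply_of_squarefree h]
    rw [abs_pow, abs_neg, abs_one, one_pow]
  · rw [ArithmeticFunction.moebius_eq_zero_of_not_squarefree h]
    norm_num

lemma modEq_cancel_eps {m ε a a' : ℤ} (hε : ε = 1 ∨ ε = -1)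
    (h : ε * a ≡ ε * a' [ZMOD m]) : a ≡ a' [ZMOD m] := by
  rcases hε with rfl | rfl
  · simpa using h
  · have := h.neg
    simpa using this

lemma small_lift_unique {n q : ℕ} (hq : q ∈ n.primeFactors) {j j' : ℤ}
    (h : j ≡ j' [ZMOD (Mp n q : ℤ)]) (hj : SmallP n q j) (hj' : SmallP n q j') :
    j ≡ j' [ZMOD (nPart n q : ℤ)] := by
  have hqp : q.Prime := Nat.prime_of_mem_primeFactors hq
  have hq0 : (0 : ℤ) < (q : ℤ) := by exact_mod_cast hqp.pos
  have hMN : (Mp n q : ℤ) * q = (nPart n q : ℤ) := by exact_mod_cast Mp_mul_q n q hq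
  set N := nPart n q
  set mj := midRep j N with hmj
  set mj' := midRep j' N with hmj'
  have e1 : mj ≡ j [ZMOD (N : ℤ)] := midRep_modEq j N
  have e2 : mj' ≡ j' [ZMOD (N : ℤ)] := midRep_modEq j' N
  have hMdvdN : (Mp n q : ℤ) ∣ (N : ℤ) := ⟨q, hMN.symm⟩
  have hmm : mj ≡ mj' [ZMOD (Mp n q : ℤ)] :=
    ((e1.of_dvd hMdvdN).trans h).trans (e2.of_dvd hMdvdN).symm
  have hdvd : (Mp n q : ℤ) ∣ mj' - mj := hmm.dvd
  have hbj : 2 * (q : ℤ) * |mj| < N := hj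
  have hbj' : 2 * (q : ℤ) * |mj'| < N := hj'
  have habs : |mj' - mj| < (Mp n q : ℤ) := by
    have h1 : |mj' - mj| ≤ |mj'| + |mj| := abs_sub _ _
    nlinarith [abs_nonneg mj, abs_nonneg mj', abs_nonneg (mj' - mj)]
  have : mj' - mj = 0 := Int.eq_zero_of_abs_lt_dvd hdvd habs
  have hmeq : mj = mj' := by omega
  exact (e1.symm.trans (hmeq ▸ e2))

def Wpred (n : ℕ) (b : ℤ) (p' : ℕ) (j : ℤ) : Prop :=
  ∃ ε : ℤ, (ε = 1 ∨ ε = -1) ∧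
    ∀ q ∈ n.primeFactors,
      (b ≡ ε * j [ZMOD (Mp n q : ℤ)]) ∧
      (q ≠ p' → ¬ SmallP n q j → b ≡ ε * j [ZMOD (nPart n q : ℤ)])

noncomputable instance (n : ℕ) (b : ℤ) (p' : ℕ) (j : ℤ) : Decidable (Wpred n b p' j) :=
  Classical.dec _

lemma W_of_delta {n : ℕ} (hodd : Odd n) {p' : ℕ} (hp' : p'.Prime) (hp'n : p' ∣ n)
    {b x j : ℤ}
    (hδ : deltaSim (n / gammaFn n x) b x ≠ 0)
    (hx : ∃ η : ℤ, (η = 1 ∨ η = -1) ∧ x ≡ η * j [ZMOD ((n / p' : ℕ) : ℤ)]) :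
    Wpred n b p' j := by
  obtain ⟨ε, hε, hbx⟩ := exists_eps_of_deltaSim_ne_zero hδ
  obtain ⟨η, hη, hxj⟩ := hx
  refine ⟨ε * η, by rcases hε with rfl | rfl <;> rcases hη with rfl | rfl <;> simp, ?_⟩
  intro q hq
  have hNodd : Odd (nPart n q) := by
    rcases Nat.even_or_odd (nPart n q) with he | ho
    · exfalso
      have h2 : 2 ∣ nPart n q := even_iff_two_dvd.mp he
      have : (2 : ℕ) ∣ n := h2.trans (Nat.ordProj_dvd n q)
      rw [Nat.odd_iff] at hodd
      omega
    · exact ho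
  constructor
  · have h1 : b ≡ ε * x [ZMOD (Mp n q : ℤ)] :=
      hbx.of_dvd (Int.natCast_dvd_natCast.mpr (Mp_dvd_div_gamma hq))
    have h2 : x ≡ η * j [ZMOD (Mp n q : ℤ)] :=
      hxj.of_dvd (Int.natCast_dvd_natCast.mpr (Mp_dvd_div_p' hq hp' hp'n))
    have := h1.trans (h2.mul_left ε)
    rwa [← mul_assoc] at this
  · intro hqp hsmall
    have hxN : x ≡ η * j [ZMOD (nPart n q : ℤ)] :=
      hxj.of_dvd (Int.natCast_dvd_natCast.mpr (Np_dvd_div_p' hq hp' hp'n hqp))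
    have habs : absRep x (nPart n q) = absRep j (nPart n q) := by
      rcases hη with rfl | rfl
      · rw [one_mul] at hxN
        exact absRep_eq_of_modEq hxN
      · rw [neg_one_mul] at hxN
        rw [absRep_eq_of_modEq hxN]
        exact absRep_neg j hNodd
    have hsx : ¬ SmallP n q x := by
      unfold SmallP at hsmall ⊢
      rw [habs]
      exact hsmall
    have h1 : b ≡ ε * x [ZMOD (nPart n q : ℤ)] :=
      hbx.of_dvd (Int.natCast_dvd_natCast.mpr (Np_dvd_div_gamma hq hsx))
    have := h1.trans (hxN.mul_left ε)
    rwa [← mul_assoc] at this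


/-- `d ≤ L` where `L` is the product of local moduli. -/
lemma d_le_L {n d p' : ℕ} (hn : n ≠ 0) (hd : d ∣ n) (hd0 : d ≠ 0)
    (hp' : p'.Prime) (hdp' : d * p' ∣ n) :
    d ≤ ∏ q ∈ n.primeFactors, (if q ∣ d ∧ q ≠ p' then nPart n q else Mp n q) := by
  classical
  have hsub : d.primeFactors ⊆ n.primeFactors := Nat.primeFactors_mono hd hn
  have hd_eq : d = ∏ q ∈ d.primeFactors, q ^ (d.factorization q) := by
    conv_lhs => rw [← Nat.factorization_prod_pow_eq_self hd0]
    rfl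
  have step1 : ∏ q ∈ d.primeFactors, q ^ (d.factorization q) ≤
      ∏ q ∈ d.primeFactors, (if q ∣ d ∧ q ≠ p' then nPart n q else Mp n q) := by
    apply Finset.prod_le_prod'
    intro q hq
    have hqp : q.Prime := Nat.prime_of_mem_primeFactors hq
    have hqd : q ∣ d := Nat.dvd_of_mem_primeFactors hq
    by_cases hqe : q = p'
    · subst hqe
      rw [if_neg (by tauto)]
      have hfle : d.factorization q + 1 ≤ n.factorization q := by
        have h1 := (Nat.factorization_le_iff_dvd (mul_ne_zero hd0 hqp.ne_zero) hn).mpr hdp'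
        have h2 := h1 q
        rw [Nat.factorization_mul hd0 hqp.ne_zero] at h2
        simp only [Finsupp.coe_add, Pi.add_apply] at h2
        have hq1 : q.factorization q = 1 := by
          rw [hqp.factorization]; simp
        rw [hq1] at h2
        omega
      exact Nat.pow_le_pow_right hqp.pos (by omega)
    · rw [if_pos ⟨hqd, hqe⟩]
      have : d.factorization q ≤ n.factorization q :=
        (Nat.factorization_le_iff_dvd hd0 hn).mpr hd q
      exact Nat.pow_le_pow_right hqp.pos this
  have step2 : ∏ q ∈ d.primeFactors, (if q ∣ d ∧ q ≠ p' then nPart n q else Mp n q) ≤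
      ∏ q ∈ n.primeFactors, (if q ∣ d ∧ q ≠ p' then nPart n q else Mp n q) := by
    apply Finset.prod_le_prod_of_subset_of_one_le' hsub
    intro q hq _
    have hqp : q.Prime := Nat.prime_of_mem_primeFactors hq
    split
    · exact Nat.one_le_iff_ne_zero.mpr (pow_ne_zero _ hqp.ne_zero)
    · exact Nat.one_le_iff_ne_zero.mpr (pow_ne_zero _ hqp.ne_zero)
  omega

set_option maxHeartbeats 1000000 in
lemma count_W {n d p' : ℕ} (hn : n ≠ 0) (hd : d ∣ n) (hd0 : d ≠ 0)
    (hp' : p'.Prime) (hdp' : d * p' ∣ n) (b : ℤ) :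
    (Finset.univ.filter fun i : Fin d => Wpred n b p' ((i : ℤ) + 1)).card ≤
      2 ^ (d.primeFactors.card + 1) := by
  classical
  set T₀ := d.primeFactors.erase p' with hT₀
  have htarget : (T₀.powerset ×ˢ (Finset.univ : Finset Bool)).card ≤
      2 ^ (d.primeFactors.card + 1) := by
    rw [Finset.card_product, Finset.card_powerset, Finset.card_univ, Fintype.card_bool]
    have h1 : T₀.card ≤ d.primeFactors.card := Finset.card_erase_le
    calc 2 ^ T₀.card * 2 ≤ 2 ^ d.primeFactors.card * 2 := by
          have := Nat.pow_le_pow_right (by norm_num : 0 < 2) h1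
          omega
      _ = 2 ^ (d.primeFactors.card + 1) := by rw [pow_succ]
  refine le_trans (Finset.card_le_card_of_injOn
    (fun i => ((T₀.filter (fun q => ¬ SmallP n q ((i : ℤ) + 1)) : Finset ℕ),
      decide ((if h : Wpred n b p' ((i : ℤ) + 1) then h.choose else 1) = 1))) ?_ ?_) htarget
  · intro i _
    simp only [Finset.mem_coe, Finset.mem_product, Finset.mem_powerset, Finset.mem_univ, and_true]
    exact Finset.filter_subset (fun q => ¬ SmallP n q ((i : ℤ) + 1)) T₀
  · intro i hi i' hi' heq
    have hW : Wpred n b p' ((i : ℤ) + 1) := by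
      have := Finset.mem_coe.mp hi; simp only [Finset.mem_filter] at this; exact this.2
    have hW' : Wpred n b p' ((i' : ℤ) + 1) := by
      have := Finset.mem_coe.mp hi'; simp only [Finset.mem_filter] at this; exact this.2
    rw [Prod.mk.injEq] at heq
    obtain ⟨hT, hB⟩ := heq
    rw [dif_pos hW, dif_pos hW'] at hB
    obtain ⟨hε1, hclause⟩ := hW.choose_spec
    obtain ⟨hε1', hclause'⟩ := hW'.choose_spec
    have hεeq : hW.choose = hW'.choose := by
      rcases hε1 with h | h <;> rcases hε1' with h' | h'
      · rw [h, h']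
      · exfalso; rw [h, h'] at hB; simp at hB
      · exfalso; rw [h, h'] at hB; simp at hB
      · rw [h, h']
    rw [← hεeq] at hclause'
    set j : ℤ := (i : ℤ) + 1 with hj
    set j' : ℤ := (i' : ℤ) + 1 with hj'
    have key : ∀ q ∈ n.primeFactors,
        ((if q ∣ d ∧ q ≠ p' then nPart n q else Mp n q : ℕ) : ℤ) ∣ (j - j') := by
      intro q hq
      by_cases hc : q ∣ d ∧ q ≠ p'
      · rw [if_pos hc]
        have hqT₀ : q ∈ T₀ := Finset.mem_erase.mpr ⟨hc.2,
          Nat.mem_primeFactors.mpr ⟨Nat.prime_of_mem_primeFactors hq, hc.1, hd0⟩⟩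
        have hstat : (¬ SmallP n q j) ↔ (¬ SmallP n q j') := by
          have hext := Finset.ext_iff.mp hT q
          simp only [Finset.mem_filter] at hext
          constructor
          · intro hs; exact (hext.mp ⟨hqT₀, hs⟩).2
          · intro hs; exact (hext.mpr ⟨hqT₀, hs⟩).2
        by_cases hs : SmallP n q j
        · have hs' : SmallP n q j' := by
            by_contra hx
            exact (hstat.mpr hx) hs
          have h1 := (hclause q hq).1
          have h2 := (hclause' q hq).1
          have hjj : j ≡ j' [ZMOD (Mp n q : ℤ)] :=
            modEq_cancel_eps hε1 (h1.symm.trans h2)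
          exact dvd_sub_comm.mp (small_lift_unique hq hjj hs hs').dvd
        · have hs' : ¬ SmallP n q j' := hstat.mp hs
          have h1 := (hclause q hq).2 hc.2 hs
          have h2 := (hclause' q hq).2 hc.2 hs'
          have hjj : j ≡ j' [ZMOD (nPart n q : ℤ)] :=
            modEq_cancel_eps hε1 (h1.symm.trans h2)
          exact dvd_sub_comm.mp hjj.dvd
      · rw [if_neg hc]
        have h1 := (hclause q hq).1
        have h2 := (hclause' q hq).1
        have hjj : j ≡ j' [ZMOD (Mp n q : ℤ)] :=
          modEq_cancel_eps hε1 (h1.symm.trans h2)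
        exact dvd_sub_comm.mp hjj.dvd
    have hpair : (↑(n.primeFactors) : Set ℕ).Pairwise
        (Function.onFun IsCoprime fun q => ((if q ∣ d ∧ q ≠ p' then nPart n q else Mp n q : ℕ) : ℤ)) := by
      intro q hq q' hq' hne
      simp only [Function.onFun]
      have hqp : q.Prime := Nat.prime_of_mem_primeFactors (Finset.mem_coe.mp hq)
      have hqp' : q'.Prime := Nat.prime_of_mem_primeFactors (Finset.mem_coe.mp hq')
      have hbase : Nat.Coprime q q' := (Nat.coprime_primes hqp hqp').mpr hne
      have h1 : ∃ a, (if q ∣ d ∧ q ≠ p' then nPart n q else Mp n q) = q ^ a := by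
        split; exacts [⟨_, rfl⟩, ⟨_, rfl⟩]
      have h2 : ∃ a, (if q' ∣ d ∧ q' ≠ p' then nPart n q' else Mp n q') = q' ^ a := by
        split; exacts [⟨_, rfl⟩, ⟨_, rfl⟩]
      obtain ⟨a, ha⟩ := h1
      obtain ⟨a', ha'⟩ := h2
      rw [ha, ha']
      exact Nat.isCoprime_iff_coprime.mpr (Nat.Coprime.pow _ _ hbase)
    have hprod : ((∏ q ∈ n.primeFactors,
        (if q ∣ d ∧ q ≠ p' then nPart n q else Mp n q) : ℕ) : ℤ) ∣ (j - j') := by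
      rw [Nat.cast_prod]
      exact Finset.prod_dvd_of_coprime hpair key
    have hdle : (d : ℤ) ≤ ((∏ q ∈ n.primeFactors,
        (if q ∣ d ∧ q ≠ p' then nPart n q else Mp n q) : ℕ) : ℤ) := by
      exact_mod_cast d_le_L hn hd hd0 hp' hdp'
    have habs : |j - j'| < (d : ℤ) := by
      have h1 : (i : ℕ) < d := i.isLt
      have h2 : (i' : ℕ) < d := i'.isLt
      have e1 : (i : ℤ) = ((i : ℕ) : ℤ) := rfl
      have e2 : ((i' : Fin d) : ℤ) = (((i' : Fin d) : ℕ) : ℤ) := rfl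
      rw [hj, hj', abs_lt]
      constructor <;> [skip; skip] <;> push_cast <;> omega
    have hz : j - j' = 0 := Int.eq_zero_of_abs_lt_dvd hprod (lt_of_lt_of_le habs hdle)
    have hii : ((i : ℕ) : ℤ) = ((i' : ℕ) : ℤ) := by
      have e1 : (i : ℤ) = ((i : ℕ) : ℤ) := rfl
      have e2 : ((i' : Fin d) : ℤ) = (((i' : Fin d) : ℕ) : ℤ) := rfl
      rw [hj, hj'] at hz
      omega
    exact Fin.ext (by exact_mod_cast hii)


/-- Abstract assembly lemma. -/
lemma assemble {d t : ℕ} (A B : Fin d → ℤ) (σ : Equiv.Perm (Fin d))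
    (W K : Fin d → Prop) [DecidablePred W] [DecidablePred K]
    (hterm : ∀ i, |A (σ i) - B i| ≤
      (if W i then (2 : ℤ) else 0) + (if K i then (1 : ℤ) else 0))
    (hWc : (Finset.univ.filter W).card ≤ 2 ^ (t + 1))
    (hKc : (Finset.univ.filter K).card ≤ 1) :
    |∑ i : Fin d, (A i - B i)| ≤ 1 + 2 ^ (t + 2) := by
  have hre : ∑ i : Fin d, (A i - B i) = ∑ i : Fin d, (A (σ i) - B i) := by
    rw [Finset.sum_sub_distrib, Finset.sum_sub_distrib, ← Equiv.sum_comp σ A]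
  calc |∑ i : Fin d, (A i - B i)| = |∑ i : Fin d, (A (σ i) - B i)| := by rw [hre]
    _ ≤ ∑ i : Fin d, |A (σ i) - B i| := Finset.abs_sum_le_sum_abs _ _
    _ ≤ ∑ i : Fin d, ((if W i then (2 : ℤ) else 0) + (if K i then (1 : ℤ) else 0)) :=
        Finset.sum_le_sum (fun i _ => hterm i)
    _ = (∑ i : Fin d, if W i then (2 : ℤ) else 0) +
        (∑ i : Fin d, if K i then (1 : ℤ) else 0) := Finset.sum_add_distrib
    _ = ((Finset.univ.filter W).card : ℤ) * 2 + ((Finset.univ.filter K).card : ℤ) * 1 := by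
        rw [← Finset.sum_filter, ← Finset.sum_filter, Finset.sum_const, Finset.sum_const,
          nsmul_eq_mul, nsmul_eq_mul]
    _ ≤ ((2 : ℤ) ^ (t + 1)) * 2 + 1 * 1 := by
        have h1 : ((Finset.univ.filter W).card : ℤ) ≤ (2 : ℤ) ^ (t + 1) := by
          exact_mod_cast Nat.cast_le.mpr hWc
        have h2 : ((Finset.univ.filter K).card : ℤ) ≤ 1 := by exact_mod_cast hKc
        have hc1 : (0 : ℤ) ≤ ((Finset.univ.filter W).card : ℤ) := by positivity
        nlinarith
    _ = 1 + 2 ^ (t + 2) := by ring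

end BDaux

open BDaux in
/-- **Lemma (Bound on coefficient differences).** Let `n` be odd, `1 < d < n` a
divisor of `n`, and `ν_1, …, ν_d` integers whose multiset of `∼_{n/c}`-classes
coincides with that of `(1, …, d)` for every divisor `c ≠ 1` of `n`.  Then for
every `b ∈ 𝔹_n`,
`|Σ_{i=1}^d (κ_{ν_i} μ(γ_n(ν_i)) δ^{(n/γ_n(ν_i))}_{b,ν_i} − μ(γ_n(i)) δ^{(n/γ_n(i))}_{b,i})|
  ≤ 1 + 2^{P(d)+2}`. -/
theorem bound_difference (n : ℕ) (hodd : Odd n) (d : ℕ) (hd : d ∣ n)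
    (hd1 : 1 < d) (hdn : d < n)
    (ν : Fin d → ℤ)
    (hperm : ∀ c : ℕ, c ∣ n → c ≠ 1 → ∃ σ : Equiv.Perm (Fin d), ∀ i : Fin d,
      ν (σ i) ≡ ((i : ℤ) + 1) [ZMOD ((n / c : ℕ) : ℕ)] ∨
      ν (σ i) ≡ -((i : ℤ) + 1) [ZMOD ((n / c : ℕ) : ℕ)])
    (b : ℕ) (hb : b ∈ BBFinset n) :
    |∑ i : Fin d,
        ((if (n : ℤ) ∣ ν i then 2 else 1) *
            (ArithmeticFunction.moebius (gammaFn n (ν i)) : ℤ) *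
            deltaSim (n / gammaFn n (ν i)) (b : ℤ) (ν i) -
          (ArithmeticFunction.moebius (gammaFn n ((i : ℤ) + 1)) : ℤ) *
            deltaSim (n / gammaFn n ((i : ℤ) + 1)) (b : ℤ) ((i : ℤ) + 1))| ≤
      1 + 2 ^ (d.primeFactors.card + 2) := by
  classical
  have hn0 : n ≠ 0 := by omega
  have hd0 : d ≠ 0 := by omega
  set e := n / d with he
  have hde : d * e = n := Nat.mul_div_cancel' hd
  have he1 : e ≠ 1 := by intro h; rw [h, mul_one] at hde; omega
  set p' := e.minFac with hp'def
  have hp' : p'.Prime := Nat.minFac_prime he1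
  have hp'e : p' ∣ e := Nat.minFac_dvd e
  have hdp' : d * p' ∣ n := by rw [← hde]; exact mul_dvd_mul_left d hp'e
  have hp'n : p' ∣ n := dvd_trans (dvd_mul_left p' d) hdp'
  have hdle : d ≤ n / p' := by
    rw [Nat.le_div_iff_mul_le hp'.pos]
    exact Nat.le_of_dvd (by omega) hdp'
  obtain ⟨σ, hσ⟩ := hperm p' hp'n hp'.ne_one
  have hη : ∀ i : Fin d, ∃ η : ℤ, (η = 1 ∨ η = -1) ∧
      ν (σ i) ≡ η * ((i : ℤ) + 1) [ZMOD ((n / p' : ℕ) : ℤ)] := by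
    intro i
    rcases hσ i with h | h
    · exact ⟨1, Or.inl rfl, by rwa [one_mul]⟩
    · exact ⟨-1, Or.inr rfl, by rwa [neg_one_mul]⟩
  refine assemble
    (fun i => (if (n : ℤ) ∣ ν i then 2 else 1) *
      (ArithmeticFunction.moebius (gammaFn n (ν i)) : ℤ) *
      deltaSim (n / gammaFn n (ν i)) (b : ℤ) (ν i))
    (fun i => (ArithmeticFunction.moebius (gammaFn n ((i : ℤ) + 1)) : ℤ) *
      deltaSim (n / gammaFn n ((i : ℤ) + 1)) (b : ℤ) ((i : ℤ) + 1))
    σ (fun i => Wpred n (b : ℤ) p' ((i : ℤ) + 1))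
    (fun i => (n : ℤ) ∣ ν (σ i)) ?_ ?_ ?_
  · -- termwise bound
    intro i
    beta_reduce
    by_cases hW : Wpred n (b : ℤ) p' ((i : ℤ) + 1)
    · rw [if_pos hW]
      have hBb : |(ArithmeticFunction.moebius (gammaFn n ((i : ℤ) + 1)) : ℤ) *
          deltaSim (n / gammaFn n ((i : ℤ) + 1)) (b : ℤ) ((i : ℤ) + 1)| ≤ 1 := by
        rw [abs_mul]
        calc |(ArithmeticFunction.moebius (gammaFn n ((i : ℤ) + 1)) : ℤ)| *
            |deltaSim (n / gammaFn n ((i : ℤ) + 1)) (b : ℤ) ((i : ℤ) + 1)| ≤ 1 * 1 :=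
              mul_le_mul (abs_moebius_le_one _) (abs_deltaSim_le_one _ _ _)
                (abs_nonneg _) zero_le_one
          _ = 1 := one_mul 1
      have hAμδ : |(ArithmeticFunction.moebius (gammaFn n (ν (σ i))) : ℤ) *
          deltaSim (n / gammaFn n (ν (σ i))) (b : ℤ) (ν (σ i))| ≤ 1 := by
        rw [abs_mul]
        calc |(ArithmeticFunction.moebius (gammaFn n (ν (σ i))) : ℤ)| *
            |deltaSim (n / gammaFn n (ν (σ i))) (b : ℤ) (ν (σ i))| ≤ 1 * 1 :=
              mul_le_mul (abs_moebius_le_one _) (abs_deltaSim_le_one _ _ _)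
                (abs_nonneg _) zero_le_one
          _ = 1 := one_mul 1
      by_cases hκ : (n : ℤ) ∣ ν (σ i)
      · rw [if_pos hκ, if_pos hκ]
        have hAb : |(2 : ℤ) * (ArithmeticFunction.moebius (gammaFn n (ν (σ i))) : ℤ) *
            deltaSim (n / gammaFn n (ν (σ i))) (b : ℤ) (ν (σ i))| ≤ 2 := by
          rw [mul_assoc, abs_mul, abs_two]
          calc (2 : ℤ) * |_| ≤ 2 * 1 := mul_le_mul_of_nonneg_left hAμδ (by norm_num)
            _ = 2 := mul_one 2
        calc |_ - _| ≤ |_| + |_| := abs_sub _ _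
          _ ≤ 2 + 1 := add_le_add hAb hBb
      · rw [if_neg hκ, if_neg hκ]
        have hAb : |(1 : ℤ) * (ArithmeticFunction.moebius (gammaFn n (ν (σ i))) : ℤ) *
            deltaSim (n / gammaFn n (ν (σ i))) (b : ℤ) (ν (σ i))| ≤ 1 := by
          rw [one_mul]; exact hAμδ
        calc |_ - _| ≤ |_| + |_| := abs_sub _ _
          _ ≤ 1 + 1 := add_le_add hAb hBb
          _ ≤ 2 + 0 := by norm_num
    · rw [if_neg hW]
      have hA0 : (if (n : ℤ) ∣ ν (σ i) then (2:ℤ) else 1) *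
          (ArithmeticFunction.moebius (gammaFn n (ν (σ i))) : ℤ) *
          deltaSim (n / gammaFn n (ν (σ i))) (b : ℤ) (ν (σ i)) = 0 := by
        by_contra hA0
        have hδ0 : deltaSim (n / gammaFn n (ν (σ i))) (b : ℤ) (ν (σ i)) ≠ 0 := by
          intro h
          rw [h, mul_zero] at hA0
          exact hA0 rfl
        exact hW (W_of_delta hodd hp' hp'n hδ0 (hη i))
      have hB0 : (ArithmeticFunction.moebius (gammaFn n ((i : ℤ) + 1)) : ℤ) *
          deltaSim (n / gammaFn n ((i : ℤ) + 1)) (b : ℤ) ((i : ℤ) + 1) = 0 := by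
        by_contra hB0
        have hδ0 : deltaSim (n / gammaFn n ((i : ℤ) + 1)) (b : ℤ) ((i : ℤ) + 1) ≠ 0 := by
          intro h
          rw [h, mul_zero] at hB0
          exact hB0 rfl
        refine hW (W_of_delta hodd hp' hp'n hδ0 ⟨1, Or.inl rfl, ?_⟩)
        rw [one_mul]
      rw [hA0, hB0]
      simp only [sub_zero, abs_zero, zero_add]
      split <;> norm_num
  · exact count_W hn0 hd hd0 hp' hdp' (b : ℤ)
  · -- kappa count
    rw [Finset.card_le_one]
    intro i hi i' hi'
    simp only [Finset.mem_filter, Finset.mem_univ, true_and] at hi hi'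
    have hm0 : (0 : ℤ) < ((n / p' : ℕ) : ℤ) := by
      have : 0 < n / p' := Nat.div_pos (Nat.le_of_dvd (by omega) hp'n) hp'.pos
      exact_mod_cast this
    have hkey : ∀ k : Fin d, (n : ℤ) ∣ ν (σ k) → ((k : ℤ) + 1) = ((n / p' : ℕ) : ℤ) := by
      intro k hk
      have hmn : ((n / p' : ℕ) : ℤ) ∣ (n : ℤ) :=
        Int.natCast_dvd_natCast.mpr (Nat.div_dvd_of_dvd hp'n)
      have h1 : ((n / p' : ℕ) : ℤ) ∣ ν (σ k) := dvd_trans hmn hk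
      obtain ⟨η, hη1, hηk⟩ := hη k
      have h3 : ((n / p' : ℕ) : ℤ) ∣ η * ((k : ℤ) + 1) := by
        have h4 := hηk.dvd
        have := dvd_add h4 h1
        simpa using this
      have h2 : ((n / p' : ℕ) : ℤ) ∣ ((k : ℤ) + 1) := by
        rcases hη1 with rfl | rfl
        · simpa using h3
        · rw [neg_one_mul] at h3
          exact (dvd_neg.mp h3)
      have hlb : ((n / p' : ℕ) : ℤ) ≤ (k : ℤ) + 1 := by
        refine Int.le_of_dvd ?_ h2
        have : (0 : ℤ) ≤ (k : ℤ) := by exact_mod_cast Int.natCast_nonneg (k : ℕ)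
        omega
      have hub : (k : ℤ) + 1 ≤ ((n / p' : ℕ) : ℤ) := by
        have h5 : (k : ℕ) < d := k.isLt
        have h6 : ((k : ℕ) : ℤ) < (d : ℤ) := by exact_mod_cast h5
        have h7 : (d : ℤ) ≤ ((n / p' : ℕ) : ℤ) := by exact_mod_cast hdle
        have h8 : ((k : Fin d) : ℤ) = ((k : ℕ) : ℤ) := rfl
        omega
      omega
    have h9 := (hkey i hi).trans (hkey i' hi').symm
    have h10 : ((i : ℕ) : ℤ) = ((i' : ℕ) : ℤ) := by
      have e1 : ((i : Fin d) : ℤ) = ((i : ℕ) : ℤ) := rfl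
      have e2 : ((i' : Fin d) : ℤ) = ((i' : ℕ) : ℤ) := rfl
      omega
    exact Fin.ext (by exact_mod_cast h10)
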